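/- If τ is a positive integer and ρ is a real number with (τ−1)/(τ+3) < ρ < 1, then (ρ(τ+1)+(1−τ))² − 4ρ < 0; consequently, the quadratic equation μ² − (ρ(τ+1)+1−τ)·μ + ρ = 0 has two non-real complex-conjugate roots μ₁, μ₂ ∈ ℂ, each of modulus |μ₁| = |μ₂| = √ρ < 1. -/

import Mathlib

open Finset MeasureTheory

theorem quadratic_complex_roots
    (τ : ℕ) (hτ : 0 < τ) (ρ : ℝ)
    (hρlo : ((τ : ℝ) - 1) / ((τ : ℝ) + 3) < ρ) (hρhi : ρ < 1) :
    (ρ * ((τ : ℝ) + 1) + (1 - (τ : ℝ))) ^ 2 - 4 * ρ < 0 ∧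
    ∃ μ₁ μ₂ : ℂ,
      μ₂ = (starRingEnd ℂ) μ₁ ∧ μ₁.im ≠ 0 ∧ μ₁ ≠ μ₂ ∧
      (∀ μ : ℂ, μ ^ 2 - ((ρ * ((τ : ℝ) + 1) + 1 - (τ : ℝ) : ℝ) : ℂ) * μ + (ρ : ℂ) = 0 ↔
        μ = μ₁ ∨ μ = μ₂) ∧
      ‖μ₁‖ = Real.sqrt ρ ∧ ‖μ₂‖ = Real.sqrt ρ ∧ Real.sqrt ρ < 1 := by
  set t : ℝ := (τ : ℝ) with ht
  have ht1 : (1 : ℝ) ≤ t := Nat.one_le_cast.2 hτ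
  have ht3 : (0 : ℝ) < t + 3 := by linarith
  have hlo' : t - 1 < ρ * (t + 3) := by
    rw [div_lt_iff₀ ht3] at hρlo; linarith
  have hρ0 : 0 < ρ := by nlinarith
  set b : ℝ := ρ * (t + 1) + (1 - t) with hb
  have hdisc : b ^ 2 - 4 * ρ < 0 := by
    nlinarith [mul_pos (sub_pos.2 hρhi) (show 0 < (t+1)^2 * ρ - (t-1)^2 by nlinarith),
      sq_nonneg (t - 1), sq_nonneg (t + 1)]
  refine ⟨hdisc, ?_⟩
  set D : ℝ := 4 * ρ - b ^ 2 with hD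
  have hDpos : 0 < D := by simp [hD]; linarith
  set s : ℝ := Real.sqrt D / 2 with hs
  have hspos : 0 < s := by positivity
  have hs2 : s ^ 2 = ρ - (b / 2) ^ 2 := by
    rw [hs, div_pow, Real.sq_sqrt hDpos.le]; rw [hD]; ring
  set μ₁ : ℂ := (b / 2 : ℝ) + (s : ℝ) * Complex.I with hμ₁
  set μ₂ : ℂ := (b / 2 : ℝ) - (s : ℝ) * Complex.I with hμ₂
  have hconj : μ₂ = (starRingEnd ℂ) μ₁ := by
    rw [hμ₁, hμ₂, map_add, map_mul, Complex.conj_ofReal, Complex.conj_ofReal,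
      Complex.conj_I]; ring
  have him : μ₁.im = s := by rw [hμ₁]; simp
  have hsum : μ₁ + μ₂ = (b : ℂ) := by
    rw [hμ₁, hμ₂]; push_cast; ring
  have hprod : μ₁ * μ₂ = (ρ : ℂ) := by
    have hr : (b / 2) ^ 2 + s ^ 2 = ρ := by linarith [hs2]
    have hc : ((b / 2 : ℝ) : ℂ) ^ 2 + ((s : ℝ) : ℂ) ^ 2 = (ρ : ℂ) := by exact_mod_cast hr
    rw [hμ₁, hμ₂]
    linear_combination hc - ((s : ℝ) : ℂ) ^ 2 * Complex.I_sq
  have habs : ∀ z : ℂ, z.re = b / 2 → z.im ^ 2 = s ^ 2 → ‖z‖ = Real.sqrt ρ := by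
    intro z hre him2
    rw [Complex.norm_def, Complex.normSq_apply]
    congr 1
    have := hs2
    nlinarith [him2]
  refine ⟨μ₁, μ₂, hconj, by rw [him]; exact hspos.ne', ?_, ?_, ?_, ?_, ?_⟩
  · intro h
    have : μ₁.im = μ₂.im := by rw [h]
    rw [him] at this
    simp [hμ₂] at this
    linarith
  · intro μ
    have hfact : μ ^ 2 - ((ρ * (t + 1) + 1 - t : ℝ) : ℂ) * μ + (ρ : ℂ)
        = (μ - μ₁) * (μ - μ₂) := by
      have hb' : ((ρ * (t + 1) + 1 - t : ℝ) : ℂ) = (b : ℂ) := by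
        rw [hb]; push_cast; ring
      rw [hb']
      linear_combination μ * hsum - hprod
    rw [hfact, mul_eq_zero, sub_eq_zero, sub_eq_zero]
  · exact habs μ₁ (by rw [hμ₁]; simp) (by rw [him])
  · refine habs μ₂ (by rw [hμ₂]; simp) ?_
    have : μ₂.im = -s := by rw [hμ₂]; simp
    rw [this]; ring
  · rw [show (1:ℝ) = Real.sqrt 1 by simp]
    exact Real.sqrt_lt_sqrt hρ0.le hρhi
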